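/- Let R be a commutative ring and i an ideal contained in the Jacobson radical of R. Then the natural map Pic(R) → Pic(R/i) induced by reduction modulo i is injective. Moreover, if i consists of nilpotent elements (i ⊆ nilradical of R), this map is an isomorphism. -/

import Mathlib

open TensorProduct

/-- An `R`-module (bundled as an object of `ModuleCat R`) is invertible if it admits a
tensor inverse, i.e., it represents an element of the Picard group `Pic(R)`. -/
def IsInvertibleModule (R : Type u) [CommRing R] (M : ModuleCat.{u} R) : Prop :=
  ∃ N : ModuleCat.{u} R, Nonempty ((M ⊗[R] N) ≃ₗ[R] R)

section Basic
variable {R : Type*} [CommRing R] {M N : Type*} [AddCommGroup M] [Module R M]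
  [AddCommGroup N] [Module R N]

/-- If `a` kills a module `M` with an inverse, then `a = 0`. -/
lemma eq_zero_of_smul_invertible (e : (M ⊗[R] N) ≃ₗ[R] R) {a : R}
    (h : ∀ m : M, a • m = 0) : a = 0 := by
  have hz : ∀ z : M ⊗[R] N, a • z = 0 := by
    intro z
    induction z using TensorProduct.induction_on with
    | zero => simp
    | tmul m n => rw [smul_tmul', h, zero_tmul]
    | add x y hx hy => rw [smul_add, hx, hy, add_zero]
  have := e.map_smul a (e.symm 1)
  rw [hz, e.apply_symm_apply, smul_eq_mul, mul_one] at this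
  exact (map_zero e ▸ this.symm)

/-- A surjective map `R →ₗ M` onto an invertible module is injective. -/
lemma injective_of_surjective_to_invertible (e : (M ⊗[R] N) ≃ₗ[R] R)
    (h : R →ₗ[R] M) (hs : Function.Surjective h) : Function.Injective h := by
  rw [← LinearMap.ker_eq_bot, eq_bot_iff]
  intro a ha
  simp only [LinearMap.mem_ker] at ha
  have hk : ∀ m : M, a • m = 0 := by
    intro m
    obtain ⟨r, rfl⟩ := hs m
    rw [← map_smul, smul_eq_mul, mul_comm, ← smul_eq_mul, map_smul, ha, smul_zero]
  simpa using eq_zero_of_smul_invertible e hk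

end Basic


section Basic
variable {R : Type*} [CommRing R] {M N : Type*} [AddCommGroup M] [Module R M]
  [AddCommGroup N] [Module R N]

/-- An invertible module is finitely generated and projective. -/
lemma finite_and_projective_of_invertible (e : (M ⊗[R] N) ≃ₗ[R] R) :
    Module.Finite R M ∧ Module.Projective R M := by
  obtain ⟨s, hs⟩ := TensorProduct.exists_finset (e.symm 1)
  -- u : M →ₗ (s → R)
  let u : M →ₗ[R] (s → R) :=
    LinearMap.pi fun p => e.toLinearMap ∘ₗ (TensorProduct.mk R M N).flip p.1.2
  let v : (s → R) →ₗ[R] M := Fintype.linearCombination R (fun p : s => (p : M × N).1)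
  -- βα
  let α : M ≃ₗ[R] (M ⊗[R] N) ⊗[R] M :=
    (TensorProduct.lid R M).symm ≪≫ₗ TensorProduct.congr e.symm (LinearEquiv.refl R M)
  let β : ((M ⊗[R] N) ⊗[R] M) ≃ₗ[R] M :=
    TensorProduct.assoc R M N M ≪≫ₗ
      LinearEquiv.lTensor M (TensorProduct.comm R N M ≪≫ₗ e) ≪≫ₗ TensorProduct.rid R M
  have key : ∀ m : M, v (u m) = β (α m) := by
    intro m
    have hα : α m = (e.symm 1) ⊗ₜ[R] m := by
      simp [α, TensorProduct.congr]
    rw [hα, hs, TensorProduct.sum_tmul, map_sum]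
    have : ∀ p : M × N, β ((p.1 ⊗ₜ[R] p.2) ⊗ₜ[R] m) = (e (m ⊗ₜ[R] p.2)) • p.1 := by
      intro p
      simp [β, TensorProduct.assoc_tmul, TensorProduct.comm_tmul, TensorProduct.rid_tmul,
        LinearEquiv.lTensor]
    simp only [this]
    rw [Fintype.linearCombination_apply]
    rw [← Finset.sum_attach s (fun p => e (m ⊗ₜ[R] p.2) • p.1)]
    rfl
  have hψ : Function.Bijective (v ∘ₗ u) := by
    have : ∀ m, (v ∘ₗ u) m = (α ≪≫ₗ β) m := fun m => key m
    have heq : (v ∘ₗ u) = (α ≪≫ₗ β : M ≃ₗ[R] M).toLinearMap := LinearMap.ext this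
    rw [heq]; exact (α ≪≫ₗ β).bijective
  let ψ := LinearEquiv.ofBijective (v ∘ₗ u) hψ
  have hvi : v ∘ₗ (u ∘ₗ (ψ.symm : M →ₗ[R] M)) = LinearMap.id := by
    ext m
    have : v (u (ψ.symm m)) = ψ (ψ.symm m) := rfl
    simpa [this] using ψ.apply_symm_apply m
  constructor
  · exact Module.Finite.of_surjective v (fun m => ⟨u (ψ.symm m), by
      simpa using LinearMap.congr_fun hvi m⟩)
  · exact Module.Projective.of_split (u ∘ₗ (ψ.symm : M →ₗ[R] M)) v hvi

end Basic


section Quot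
variable {R : Type*} [CommRing R] (I : Ideal R) {M : Type*} [AddCommGroup M] [Module R M]

/-- The natural reduction map `M →ₗ[R] (R⧸I) ⊗[R] M`. -/
noncomputable def redMap : M →ₗ[R] ((R ⧸ I) ⊗[R] M) :=
  TensorProduct.mk R (R ⧸ I) M 1

lemma redMap_surjective : Function.Surjective (redMap I (M := M)) := by
  intro z
  induction z using TensorProduct.induction_on with
  | zero => exact ⟨0, map_zero _⟩
  | tmul s m =>
    obtain ⟨r, rfl⟩ := Ideal.Quotient.mk_surjective s
    refine ⟨r • m, ?_⟩
    simp only [redMap, TensorProduct.mk_apply, TensorProduct.tmul_smul]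
    rw [TensorProduct.smul_tmul']
    congr 1
    rw [Algebra.smul_def, Ideal.Quotient.algebraMap_eq, mul_one]
  | add x y hx hy =>
    obtain ⟨a, ha⟩ := hx; obtain ⟨b, hb⟩ := hy
    exact ⟨a + b, by rw [map_add, ha, hb]⟩

lemma redMap_eq_zero_iff {m : M} :
    redMap I m = 0 ↔ m ∈ I • (⊤ : Submodule R M) := by
  have h1 : (TensorProduct.quotTensorEquivQuotSMul M I) (redMap I m)
      = Submodule.Quotient.mk m := by
    have : redMap I m = (Ideal.Quotient.mk I 1) ⊗ₜ[R] m := by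
      simp [redMap]
    rw [this, TensorProduct.quotTensorEquivQuotSMul_mk_tmul, one_smul]
  constructor
  · intro h
    have h2 : Submodule.Quotient.mk m = (0 : M ⧸ (I • (⊤ : Submodule R M))) := by
      rw [← h1, h, map_zero]
    exact (Submodule.Quotient.mk_eq_zero _).mp h2
  · intro h
    apply (TensorProduct.quotTensorEquivQuotSMul M I).injective
    rw [h1, map_zero, Submodule.Quotient.mk_eq_zero]
    exact h

end Quot

section Nak
variable {R : Type*} [CommRing R] {I : Ideal R} {M : Type*} [AddCommGroup M] [Module R M]

/-- Nakayama: if `W ⊔ I•⊤ = ⊤` with `M` f.g. and `I ≤ jacobson ⊥`, then `W = ⊤`. -/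
lemma sup_smul_top_nakayama [Module.Finite R M] (hI : I ≤ (⊥ : Ideal R).jacobson)
    (W : Submodule R M) (h : (⊤ : Submodule R M) ≤ W ⊔ I • ⊤) : W = ⊤ := by
  rw [← Submodule.Quotient.subsingleton_iff]
  set Q := M ⧸ W
  have hfin : Module.Finite R Q := Module.Finite.of_surjective W.mkQ (Submodule.mkQ_surjective W)
  have htop : (⊤ : Submodule R Q) ≤ I • (⊤ : Submodule R Q) := by
    have h1 : (⊤ : Submodule R Q) = Submodule.map W.mkQ ⊤ := by
      rw [Submodule.map_top, Submodule.range_mkQ]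
    rw [h1]
    calc Submodule.map W.mkQ ⊤ ≤ Submodule.map W.mkQ (W ⊔ I • ⊤) := Submodule.map_mono h
      _ = Submodule.map W.mkQ W ⊔ Submodule.map W.mkQ (I • ⊤) := Submodule.map_sup _ _ _
      _ ≤ ⊥ ⊔ I • Submodule.map W.mkQ ⊤ := by
          apply sup_le_sup
          · intro x hx
            obtain ⟨w, hw, rfl⟩ := hx
            simp only [Submodule.mkQ_apply, Submodule.mem_bot, Submodule.Quotient.mk_eq_zero]
            exact hw
          · rw [Submodule.map_smul'']
      _ = I • Submodule.map W.mkQ ⊤ := by rw [bot_sup_eq]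
  have := Submodule.eq_bot_of_le_smul_of_le_jacobson_bot I ⊤ (Module.finite_def.mp hfin) htop hI
  constructor
  intro a b
  have ha : a ∈ (⊤ : Submodule R Q) := trivial
  have hb : b ∈ (⊤ : Submodule R Q) := trivial
  rw [this, Submodule.mem_bot] at ha hb
  rw [ha, hb]

end Nak


section P1
variable {R : Type*} [CommRing R] (I : Ideal R)
  {M M' N N' : Type*} [AddCommGroup M] [Module R M] [AddCommGroup M'] [Module R M']
  [AddCommGroup N] [Module R N] [AddCommGroup N'] [Module R N']

lemma pic_injective (hJ : I ≤ (⊥ : Ideal R).jacobson)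
    (eM : (M ⊗[R] M') ≃ₗ[R] R) (eN : (N ⊗[R] N') ≃ₗ[R] R)
    (eb : ((R ⧸ I) ⊗[R] M) ≃ₗ[R ⧸ I] ((R ⧸ I) ⊗[R] N)) : Nonempty (M ≃ₗ[R] N) := by
  haveI hMproj : Module.Projective R M := (finite_and_projective_of_invertible eM).2
  haveI hNfin : Module.Finite R N := (finite_and_projective_of_invertible eN).1
  let ebR := eb.restrictScalars R
  obtain ⟨f, hf⟩ := Module.projective_lifting_property (redMap I (M := N))
    (ebR.toLinearMap ∘ₗ redMap I) (redMap_surjective I)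
  -- f is surjective by Nakayama
  have hfsurj : Function.Surjective f := by
    rw [← LinearMap.range_eq_top]
    apply sup_smul_top_nakayama hJ
    intro n _
    obtain ⟨z, hz⟩ := redMap_surjective I (ebR.symm (redMap I n))
    have hzn : ebR (redMap I z) = redMap I n := by rw [hz, LinearEquiv.apply_symm_apply]
    have h0 : redMap I (n - f z) = 0 := by
      have hc := LinearMap.congr_fun hf z
      simp only [LinearMap.coe_comp, Function.comp_apply, LinearEquiv.coe_coe] at hc
      rw [map_sub, hc, hzn, sub_self]
    have hmem : n - f z ∈ I • (⊤ : Submodule R N) := (redMap_eq_zero_iff I).mp h0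
    have : n = f z + (n - f z) := by abel
    rw [this]
    exact Submodule.add_mem _
      (Submodule.mem_sup_left (LinearMap.mem_range_self f z))
      (Submodule.mem_sup_right hmem)
  -- tensoring with M' : M ⊗ M' → N ⊗ M' is bijective
  let g1 := LinearMap.rTensor M' f
  have hg1surj : Function.Surjective g1 := LinearMap.rTensor_surjective M' hfsurj
  let e2 : ((N ⊗[R] M') ⊗[R] (N' ⊗[R] M)) ≃ₗ[R] R :=
    TensorProduct.tensorTensorTensorComm R N M' N' M ≪≫ₗ
      TensorProduct.congr eN (TensorProduct.comm R M' M ≪≫ₗ eM) ≪≫ₗ TensorProduct.lid R R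
  let h : R →ₗ[R] (N ⊗[R] M') := g1 ∘ₗ eM.symm.toLinearMap
  have hhsurj : Function.Surjective h := hg1surj.comp eM.symm.surjective
  have hhinj : Function.Injective h := injective_of_surjective_to_invertible e2 h hhsurj
  have hg1bij : Function.Bijective g1 := by
    have heq : ⇑g1 = ⇑h ∘ ⇑eM := by
      funext x
      simp only [h, LinearMap.coe_comp, Function.comp_apply, LinearEquiv.coe_coe,
        LinearEquiv.symm_apply_apply]
    rw [heq]
    exact Function.Bijective.comp ⟨hhinj, hhsurj⟩ eM.bijective
  -- tensoring once more with M
  let g1e := LinearEquiv.ofBijective g1 hg1bij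
  have hGbij : Function.Bijective (LinearMap.rTensor M g1) := by
    have : LinearMap.rTensor M g1 = (LinearEquiv.rTensor M g1e).toLinearMap := rfl
    rw [this]
    exact (LinearEquiv.rTensor M g1e).bijective
  let bM : ((M ⊗[R] M') ⊗[R] M) ≃ₗ[R] M :=
    TensorProduct.assoc R M M' M ≪≫ₗ
      LinearEquiv.lTensor M (TensorProduct.comm R M' M ≪≫ₗ eM) ≪≫ₗ TensorProduct.rid R M
  let bN : ((N ⊗[R] M') ⊗[R] M) ≃ₗ[R] N :=
    TensorProduct.assoc R N M' M ≪≫ₗ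
      LinearEquiv.lTensor N (TensorProduct.comm R M' M ≪≫ₗ eM) ≪≫ₗ TensorProduct.rid R N
  have key : bN.toLinearMap ∘ₗ LinearMap.rTensor M g1 = f ∘ₗ bM.toLinearMap := by
    apply TensorProduct.ext_threefold
    intro m m' x
    simp only [bM, bN, g1, LinearMap.coe_comp, Function.comp_apply, LinearEquiv.coe_coe,
      LinearMap.rTensor_tmul, LinearEquiv.trans_apply, TensorProduct.assoc_tmul,
      LinearEquiv.lTensor_tmul, TensorProduct.comm_tmul, TensorProduct.rid_tmul, map_smul]
  have hfbij : Function.Bijective f := by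
    have heq : ⇑f = ⇑bN ∘ ⇑(LinearMap.rTensor M g1) ∘ ⇑bM.symm := by
      funext y
      have := LinearMap.congr_fun key (bM.symm y)
      simp only [LinearMap.coe_comp, Function.comp_apply, LinearEquiv.coe_coe,
        LinearEquiv.apply_symm_apply] at this
      simpa using this.symm
    rw [heq]
    exact bN.bijective.comp (hGbij.comp bM.symm.bijective)
  exact ⟨LinearEquiv.ofBijective f hfbij⟩
end P1


section MatNil
variable {R : Type*} [CommRing R] {k : ℕ}

lemma matrix_isNilpotent_of_entries (A : Matrix (Fin k) (Fin k) R)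
    (hA : ∀ i j, A i j ∈ nilradical R) : IsNilpotent A := by
  classical
  set J : Ideal R := Ideal.span (Set.range fun p : Fin k × Fin k => A p.1 p.2) with hJ
  have hfg : J.FG := Submodule.fg_span (Set.finite_range _)
  have hle : J ≤ (⊥ : Ideal R).radical := by
    rw [hJ, Ideal.span_le]
    rintro x ⟨p, rfl⟩
    exact hA p.1 p.2
  obtain ⟨n, hn⟩ := Ideal.exists_pow_le_of_le_radical_of_fg hle hfg
  have hpow : ∀ (m : ℕ) (i j : Fin k), (A ^ m) i j ∈ J ^ m := by
    intro m
    induction m with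
    | zero => intro i j; simp [Ideal.one_eq_top]
    | succ m ih =>
      intro i j
      rw [show A ^ (m + 1) = A ^ m * A from pow_succ A m, Matrix.mul_apply, pow_succ J m]
      apply Ideal.sum_mem
      intro c _
      exact Ideal.mul_mem_mul (ih i c) (Ideal.subset_span ⟨(c, j), rfl⟩)
  refine ⟨n, ?_⟩
  ext i j
  have := hn (hpow n i j)
  simpa using this
end MatNil


section Lift
universe u
variable {R : Type u} [CommRing R] (I : Ideal R)

lemma lift_fg_projective (hnil : I ≤ nilradical R)
    (P : Type u) [AddCommGroup P] [Module (R ⧸ I) P]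
    [Module.Finite (R ⧸ I) P] [Module.Projective (R ⧸ I) P] :
    ∃ (k : ℕ) (g : (Fin k → R) →ₗ[R] (Fin k → R)),
      (∀ x, g (g x) = g x) ∧ Module.Finite R (LinearMap.range g) ∧
      Module.Projective R (LinearMap.range g) ∧
      Nonempty (((R ⧸ I) ⊗[R] (LinearMap.range g)) ≃ₗ[R ⧸ I] P) := by
  classical
  obtain ⟨k, π, hπ⟩ := Module.Finite.exists_fin' (R ⧸ I) P
  obtain ⟨σ, hσ⟩ := Module.projective_lifting_property π LinearMap.id hπ
  set q : (Fin k → R ⧸ I) →ₗ[R ⧸ I] (Fin k → R ⧸ I) := σ ∘ₗ π with hq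
  have hqq : q ∘ₗ q = q := by
    refine LinearMap.ext fun x => ?_
    simp only [hq, LinearMap.comp_apply]
    have e1 : (π ∘ₗ σ) (π x) = LinearMap.id (π x) := LinearMap.congr_fun hσ (π x)
    simp only [LinearMap.comp_apply, LinearMap.id_apply] at e1
    rw [e1]
  set qm := LinearMap.toMatrix' q with hqmdef
  have hqm : IsIdempotentElem qm := by
    unfold IsIdempotentElem
    rw [hqmdef, ← LinearMap.toMatrix'_comp, hqq]
  set Φ : Matrix (Fin k) (Fin k) R →+* Matrix (Fin k) (Fin k) (R ⧸ I) :=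
    (Ideal.Quotient.mk I).mapMatrix with hΦ
  have hker : ∀ x ∈ RingHom.ker Φ, IsNilpotent x := by
    intro X hX
    apply matrix_isNilpotent_of_entries
    intro i j
    apply hnil
    have : (Ideal.Quotient.mk I) (X i j) = 0 := by
      have := congrFun (congrFun (congrArg (fun M => (M : Matrix _ _ _)) hX) i) j
      simpa [hΦ, RingHom.mapMatrix_apply, Matrix.map_apply] using this
    exact Ideal.Quotient.eq_zero_iff_mem.mp this
  have hrange : qm ∈ Φ.range := by
    refine ⟨Matrix.of fun i j => (Ideal.Quotient.mk_surjective (qm i j)).choose, ?_⟩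
    ext i j
    simp only [hΦ, RingHom.mapMatrix_apply, Matrix.map_apply, Matrix.of_apply]
    exact (Ideal.Quotient.mk_surjective (qm i j)).choose_spec
  obtain ⟨E, hEidem, hE⟩ := exists_isIdempotentElem_eq_of_ker_isNilpotent Φ hker qm hrange hqm
  set g : (Fin k → R) →ₗ[R] (Fin k → R) := Matrix.toLin' E with hg
  have hgg : g ∘ₗ g = g := by
    rw [hg, ← Matrix.toLin'_mul, hEidem.eq]
  have hgp : ∀ x, g (g x) = g x := fun x => by
    rw [← LinearMap.comp_apply, hgg]
  set Mo := LinearMap.range g with hMo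
  let i : Mo →ₗ[R] (Fin k → R) := Mo.subtype
  let p : (Fin k → R) →ₗ[R] Mo := g.rangeRestrict
  have hpi : p ∘ₗ i = LinearMap.id := by
    refine LinearMap.ext fun w => Subtype.ext ?_
    obtain ⟨x, hx⟩ := w
    obtain ⟨y, rfl⟩ := hx
    simpa [p, i] using hgp y
  have hip : i ∘ₗ p = g := rfl
  have hfin : Module.Finite R Mo :=
    Module.Finite.of_surjective p g.surjective_rangeRestrict
  have hproj : Module.Projective R Mo := Module.Projective.of_split i p hpi
  -- the base-change equivalence
  let b := Pi.basisFun R (Fin k)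
  let d : Module.Basis (Fin k) (R ⧸ I) ((R ⧸ I) ⊗[R] (Fin k → R)) :=
    Algebra.TensorProduct.basis (R ⧸ I) b
  let c := d.equivFun
  have hmat : LinearMap.toMatrix d d (g.baseChange (R ⧸ I)) = qm := by
    rw [LinearMap.toMatrix_baseChange]
    have h1 : LinearMap.toMatrix b b g = E := by
      rw [hg, LinearMap.toMatrix_eq_toMatrix', LinearMap.toMatrix'_toLin']
    rw [h1, Ideal.Quotient.algebraMap_eq, ← hE]
    rfl
  have hkey : ∀ x, c ((g.baseChange (R ⧸ I)) x) = q (c x) := by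
    intro x
    have h2 := LinearMap.toMatrix_mulVec_repr d d (g.baseChange (R ⧸ I)) x
    have h3 : q (c x) = qm.mulVec (c x) := by
      rw [hqmdef, ← Matrix.toLin'_apply, Matrix.toLin'_toMatrix']
    rw [h3, ← hmat]
    funext j
    have := congrFun h2 j
    simp only [Module.Basis.equivFun_apply, c]
    exact this.symm ▸ rfl
  have hkey' : c.symm.toLinearMap ∘ₗ q.comp c.toLinearMap = g.baseChange (R ⧸ I) := by
    refine LinearMap.ext fun x => ?_
    simp only [LinearMap.coe_comp, Function.comp_apply, LinearEquiv.coe_coe]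
    rw [← hkey, LinearEquiv.symm_apply_apply]
  let u : ((R ⧸ I) ⊗[R] Mo) →ₗ[R ⧸ I] P := π ∘ₗ c.toLinearMap ∘ₗ (i.baseChange (R ⧸ I))
  let v : P →ₗ[R ⧸ I] ((R ⧸ I) ⊗[R] Mo) := (p.baseChange (R ⧸ I)) ∘ₗ c.symm.toLinearMap ∘ₗ σ
  have hbc_g : (i.baseChange (R ⧸ I)) ∘ₗ (p.baseChange (R ⧸ I)) = g.baseChange (R ⧸ I) := by
    rw [← LinearMap.baseChange_comp, hip]
  have hbc_id : (p.baseChange (R ⧸ I)) ∘ₗ (i.baseChange (R ⧸ I)) = LinearMap.id := by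
    rw [← LinearMap.baseChange_comp, hpi, LinearMap.baseChange_id]
  have huv : u ∘ₗ v = LinearMap.id := by
    refine LinearMap.ext fun x => ?_
    simp only [u, v, LinearMap.coe_comp, Function.comp_apply, LinearEquiv.coe_coe,
      LinearMap.id_coe, id_eq]
    rw [← LinearMap.comp_apply (i.baseChange (R ⧸ I)) (p.baseChange (R ⧸ I)), hbc_g]
    rw [hkey, LinearEquiv.apply_symm_apply]
    simp only [hq, LinearMap.comp_apply]
    have e1 : (π ∘ₗ σ) (π (σ x)) = LinearMap.id (π (σ x)) := LinearMap.congr_fun hσ (π (σ x))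
    have e2 : (π ∘ₗ σ) x = LinearMap.id x := LinearMap.congr_fun hσ x
    simp only [LinearMap.comp_apply, LinearMap.id_apply] at e1 e2
    rw [e1, e2]
  have hvu : v ∘ₗ u = LinearMap.id := by
    have e4 : (p.baseChange (R ⧸ I)) ∘ₗ (g.baseChange (R ⧸ I)) ∘ₗ (i.baseChange (R ⧸ I))
        = LinearMap.id := by
      rw [← hbc_g]
      simp only [← LinearMap.comp_assoc]
      rw [hbc_id, LinearMap.id_comp, hbc_id]
    refine LinearMap.ext fun z => ?_
    simp only [u, v, LinearMap.coe_comp, Function.comp_apply, LinearEquiv.coe_coe,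
      LinearMap.id_coe, id_eq]
    have hσπ : σ (π (c ((i.baseChange (R ⧸ I)) z))) = q (c ((i.baseChange (R ⧸ I)) z)) := rfl
    have e2 := LinearMap.congr_fun hkey' ((i.baseChange (R ⧸ I)) z)
    simp only [LinearMap.coe_comp, Function.comp_apply, LinearEquiv.coe_coe] at e2
    rw [hσπ, e2]
    have := LinearMap.congr_fun e4 z
    simpa using this

  exact ⟨k, g, hgp, hfin, hproj, ⟨LinearEquiv.ofLinear u v huv hvu⟩⟩
end Lift


lemma surj_endo_injective {S : Type*} [CommRing S] (w : S →ₗ[S] S)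
    (hw : Function.Surjective w) : Function.Injective w := by
  obtain ⟨y, hy⟩ := hw 1
  have hw1 : ∀ a : S, w a = a * w 1 := by
    intro a
    rw [← smul_eq_mul, ← map_smul, smul_eq_mul, mul_one]
  intro a b hab
  rw [hw1 a, hw1 b] at hab
  have hu : y * w 1 = 1 := by rw [← hw1 y, hy]
  calc a = a * (w 1 * y) := by rw [mul_comm (w 1) y, hu, mul_one]
    _ = (a * w 1) * y := by ring
    _ = (b * w 1) * y := by rw [hab]
    _ = b := by rw [mul_assoc, mul_comm (w 1) y, hu, mul_one]



section LemA
variable {R : Type*} [CommRing R] (I : Ideal R)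
variable {T : Type*} [AddCommGroup T] [Module R T]

lemma equiv_ring_of_baseChange_equiv (hJ : I ≤ (⊥ : Ideal R).jacobson)
    [Module.Finite R T] [Module.Projective R T]
    (e : ((R ⧸ I) ⊗[R] T) ≃ₗ[R ⧸ I] (R ⧸ I)) : Nonempty (T ≃ₗ[R] R) := by
  obtain ⟨t₀, ht₀⟩ := redMap_surjective I (e.symm 1)
  set h := LinearMap.toSpanSingleton R T t₀ with hh
  -- h is surjective
  have hcyc : (⊤ : Submodule R T) ≤ Submodule.span R {t₀} ⊔ I • ⊤ := by
    intro t _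
    obtain ⟨s, hs⟩ := Ideal.Quotient.mk_surjective (e (redMap I t))
    have hz : redMap I (t - s • t₀) = 0 := by
      apply e.injective
      rw [map_sub, map_smul, map_zero, map_sub]
      have e1 : e ((s : R) • redMap I t₀) = (Ideal.Quotient.mk I s) • e (redMap I t₀) := by
        rw [← algebraMap_smul (R ⧸ I) s (redMap I t₀), map_smul,
          Ideal.Quotient.algebraMap_eq]
      rw [e1, ht₀, LinearEquiv.apply_symm_apply, smul_eq_mul, mul_one, ← hs, sub_self]
    have hmem : t - s • t₀ ∈ I • (⊤ : Submodule R T) := (redMap_eq_zero_iff I).mp hz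
    have ht : t = s • t₀ + (t - s • t₀) := by abel
    rw [ht]
    exact Submodule.add_mem _
      (Submodule.mem_sup_left (Submodule.smul_mem _ s (Submodule.mem_span_singleton_self t₀)))
      (Submodule.mem_sup_right hmem)
  have hspan : Submodule.span R {t₀} = ⊤ := sup_smul_top_nakayama hJ _ hcyc
  have hsurj : Function.Surjective h := by
    rw [← LinearMap.range_eq_top, ← LinearMap.span_singleton_eq_range, hspan]
  obtain ⟨σ, hσ⟩ := Module.projective_lifting_property h LinearMap.id hsurj
  set e' : R →ₗ[R] R := LinearMap.id - σ ∘ₗ h with he'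
  have hrk : LinearMap.range e' = LinearMap.ker h := by
    apply le_antisymm
    · rintro x ⟨y, rfl⟩
      simp only [he', LinearMap.sub_apply, LinearMap.id_apply, LinearMap.comp_apply,
        LinearMap.mem_ker, map_sub]
      rw [show h (σ (h y)) = h y from LinearMap.congr_fun hσ (h y), sub_self]
    · intro a ha
      refine ⟨a, ?_⟩
      simp only [he', LinearMap.sub_apply, LinearMap.id_apply, LinearMap.comp_apply,
        LinearMap.mem_ker.mp ha, map_zero, sub_zero]
  -- ker h ≤ I
  have hbcinj : Function.Injective (h.baseChange (R ⧸ I)) := by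
    let ρ : ((R ⧸ I) ⊗[R] R) ≃ₗ[R ⧸ I] (R ⧸ I) := TensorProduct.AlgebraTensorModule.rid R (R ⧸ I) (R ⧸ I)
    have hbcsurj : Function.Surjective (h.baseChange (R ⧸ I)) := by
      rw [LinearMap.baseChange_eq_ltensor h]
      exact LinearMap.lTensor_surjective _ hsurj
    let w : (R ⧸ I) →ₗ[R ⧸ I] (R ⧸ I) := e.toLinearMap ∘ₗ h.baseChange (R ⧸ I) ∘ₗ ρ.symm.toLinearMap
    have hwsurj : Function.Surjective w := by
      simp only [w, LinearMap.coe_comp, LinearEquiv.coe_coe]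
      exact e.surjective.comp (hbcsurj.comp ρ.symm.surjective)
    have hwinj := surj_endo_injective w hwsurj
    have heq : ⇑(h.baseChange (R ⧸ I)) = ⇑e.symm ∘ ⇑w ∘ ⇑ρ := by
      funext z
      simp only [w, Function.comp_apply, LinearMap.coe_comp, LinearEquiv.coe_coe,
        LinearEquiv.symm_apply_apply]
    rw [heq]
    exact e.symm.injective.comp (hwinj.comp ρ.injective)
  have hkerI : LinearMap.ker h ≤ I := by
    intro a ha
    have h1 : h.baseChange (R ⧸ I) ((1 : R ⧸ I) ⊗ₜ[R] a) = 0 := by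
      rw [LinearMap.baseChange_tmul, LinearMap.mem_ker.mp ha, TensorProduct.tmul_zero]
    have h2 : ((1 : R ⧸ I) ⊗ₜ[R] a : (R ⧸ I) ⊗[R] R) = 0 := by
      apply hbcinj
      rw [h1, map_zero]
    have h3 := congrArg (TensorProduct.AlgebraTensorModule.rid R (R ⧸ I) (R ⧸ I)) h2
    rw [TensorProduct.AlgebraTensorModule.rid_tmul, map_zero, Algebra.smul_def,
      Ideal.Quotient.algebraMap_eq, mul_one] at h3
    exact Ideal.Quotient.eq_zero_iff_mem.mp h3
  -- Nakayama on ker h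
  have hkle : LinearMap.ker h ≤ I • (LinearMap.ker h : Submodule R R) := by
    intro a ha
    have ha' : a ∈ I • (⊤ : Submodule R R) := by
      have h4 := Submodule.smul_mem_smul (hkerI ha) (Submodule.mem_top (x := (1 : R)))
      rwa [show a • (1 : R) = a from by rw [smul_eq_mul, mul_one]] at h4
    have hea : e' a = a := by
      simp only [he', LinearMap.sub_apply, LinearMap.id_apply, LinearMap.comp_apply,
        LinearMap.mem_ker.mp ha, map_zero, sub_zero]
    have : e' a ∈ Submodule.map e' (I • (⊤ : Submodule R R)) := Submodule.mem_map_of_mem ha'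
    rw [Submodule.map_smul''] at this
    rw [hea] at this
    refine Submodule.smul_mono le_rfl ?_ this
    rw [Submodule.map_top, hrk]
  have hkfg : (LinearMap.ker h : Submodule R R).FG := by
    rw [← hrk, LinearMap.range_eq_map]
    exact Submodule.FG.map e' (Module.finite_def.mp inferInstance)
  have hker0 : LinearMap.ker h = ⊥ :=
    Submodule.eq_bot_of_le_smul_of_le_jacobson_bot I _ hkfg hkle hJ
  have hinj : Function.Injective h := LinearMap.ker_eq_bot.mp hker0
  exact ⟨(LinearEquiv.ofBijective h ⟨hinj, hsurj⟩).symm⟩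
end LemA


set_option maxHeartbeats 1000000 in
set_option synthInstance.maxHeartbeats 1000000 in
theorem stmt19 {R : Type u} [CommRing R] (I : Ideal R)
    (hJ : I ≤ (⊥ : Ideal R).jacobson) :
    (∀ M N : ModuleCat.{u} R, IsInvertibleModule R M → IsInvertibleModule R N →
      Nonempty (((R ⧸ I) ⊗[R] M) ≃ₗ[R ⧸ I] ((R ⧸ I) ⊗[R] N)) →
      Nonempty (M ≃ₗ[R] N)) ∧
    (I ≤ nilradical R →
      ∀ P : ModuleCat.{u} (R ⧸ I), IsInvertibleModule (R ⧸ I) P →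
        ∃ M : ModuleCat.{u} R, IsInvertibleModule R M ∧
          Nonempty (((R ⧸ I) ⊗[R] M) ≃ₗ[R ⧸ I] P)) := by
  constructor
  · rintro M N ⟨M', ⟨eM⟩⟩ ⟨N', ⟨eN⟩⟩ ⟨eb⟩
    exact pic_injective I hJ eM eN eb
  · intro hnil P hP
    obtain ⟨Q, ⟨e⟩⟩ := hP
    -- P and Q are finite and projective over R ⧸ I
    haveI hPfin : Module.Finite (R ⧸ I) P := (finite_and_projective_of_invertible e).1
    haveI hPproj : Module.Projective (R ⧸ I) P := (finite_and_projective_of_invertible e).2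
    have eQ : ((Q : Type u) ⊗[R ⧸ I] (P : Type u)) ≃ₗ[R ⧸ I] (R ⧸ I) :=
      (TensorProduct.comm (R ⧸ I) Q P) ≪≫ₗ e
    haveI hQfin : Module.Finite (R ⧸ I) Q := (finite_and_projective_of_invertible eQ).1
    haveI hQproj : Module.Projective (R ⧸ I) Q := (finite_and_projective_of_invertible eQ).2
    -- lift P and Q to f.g. projective R-modules
    obtain ⟨k₁, g₁, _, hfin₁, hproj₁, ⟨eP⟩⟩ := lift_fg_projective I hnil P
    obtain ⟨k₂, g₂, _, hfin₂, hproj₂, ⟨eQl⟩⟩ := lift_fg_projective I hnil Q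
    haveI := hfin₁; haveI := hproj₁; haveI := hfin₂; haveI := hproj₂
    set M₀ := LinearMap.range g₁
    set N₀ := LinearMap.range g₂
    -- base change of the tensor product
    let eT : ((R ⧸ I) ⊗[R] ((M₀ : Type u) ⊗[R] (N₀ : Type u))) ≃ₗ[R ⧸ I] (R ⧸ I) :=
      TensorProduct.AlgebraTensorModule.distribBaseChange R (R ⧸ I) M₀ N₀ ≪≫ₗ
        TensorProduct.congr eP eQl ≪≫ₗ e
    haveI hTfin : Module.Finite R ((M₀ : Type u) ⊗[R] (N₀ : Type u)) :=
      Module.Finite.tensorProduct R M₀ N₀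
    haveI hTproj : Module.Projective R ((M₀ : Type u) ⊗[R] (N₀ : Type u)) :=
      Module.Projective.tensorProduct
    obtain ⟨eR⟩ := equiv_ring_of_baseChange_equiv (T := (M₀ : Type u) ⊗[R] (N₀ : Type u)) I hJ eT
    refine ⟨ModuleCat.of R M₀, ⟨ModuleCat.of R N₀, ⟨eR⟩⟩, ⟨eP⟩⟩
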